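/- Let R be a commutative ring with invertible elements x, y, and let M₊ = !![1−x, −y; −x·y⁻¹, 0], M₋ = !![0, −x⁻¹·y; −y⁻¹, 1−x⁻¹]. Let n ≥ 1, ε : Fin n → Bool, σ a permutation of Fin n × Fin 2 with block-diagonal matrix M and permutation matrix P. Fix an index (i,a) in Fin n × Fin 2, a sign s ∈ Bool for a new crossing c, and a side t ∈ Fin 2 for a loop at c; let t' be the other side. On Fin (n+1) × Fin 2 define σ' by σ'(c,t) = (c,t), σ'(i,a) = (c,t'), σ'(c,t') = σ(i,a), and σ' = σ elsewhere, with ε'(c) = s and ε' = ε on old crossings; let M', P' be the corresponding block-diagonal and permutation matrices. Then det(M' − P') = κ · det(M − P), where κ = −x if s is positive and t = 0 (left loop), κ = −1 if s is positive and t = 1 (right loop), κ = −1 if s is negative and t = 0, and κ = −x⁻¹ if s is negative and t = 1. -/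

import Mathlib

/-- The local crossing matrix assigned to a positive classical crossing in the
Jaeger–Kauffman–Saleur determinant model. -/
def Mpos {R : Type*} [CommRing R] (x y : Rˣ) : Matrix (Fin 2) (Fin 2) R :=
  !![1 - (x : R), -(y : R); -((x : R) * ((y⁻¹ : Rˣ) : R)), 0]

/-- The local crossing matrix assigned to a negative classical crossing. -/
def Mneg {R : Type*} [CommRing R] (x y : Rˣ) : Matrix (Fin 2) (Fin 2) R :=
  !![0, -(((x⁻¹ : Rˣ) : R) * (y : R)); -((y⁻¹ : Rˣ) : R), 1 - ((x⁻¹ : Rˣ) : R)]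

/-- The block-diagonal matrix indexed by `ι × Fin 2` whose diagonal `2×2` block at
index `i` is `blk i`. -/
def blockDiag {R : Type*} [CommRing R] {ι : Type*} [DecidableEq ι]
    (blk : ι → Matrix (Fin 2) (Fin 2) R) : Matrix (ι × Fin 2) (ι × Fin 2) R :=
  fun p q => if p.1 = q.1 then blk p.1 p.2 q.2 else 0

/-- The permutation matrix of `σ`: entry `1` at position `(p, σ p)` and `0` elsewhere. -/
def permMat (R : Type*) [CommRing R] {ι : Type*} [DecidableEq ι] (σ : Equiv.Perm ι) :
    Matrix ι ι R :=
  fun p q => if σ p = q then 1 else 0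

/-- Reindexing equivalence used for the Reidemeister I move: the old indices are embedded
via `castSucc`, and the two half-edges of the new crossing `Fin.last n` are listed with
side `t` first. -/
def kinkEquiv (n : ℕ) (t : Fin 2) : (Fin n × Fin 2) ⊕ Fin 2 ≃ Fin (n + 1) × Fin 2 where
  toFun x := Sum.elim (fun p => (p.1.castSucc, p.2))
    (fun j => (Fin.last n, Equiv.swap 0 t j)) x
  invFun q := Fin.lastCases (Sum.inr (Equiv.swap 0 t q.2)) (fun i => Sum.inl (i, q.2)) q.1
  left_inv := by rintro (⟨i, a⟩ | j) <;> simp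
  right_inv := by
    rintro ⟨i, a⟩
    induction i using Fin.lastCases <;> simp

/-- Behaviour of `det(M − P)` under Reidemeister move I: inserting a kink at a new
crossing `c = n` of sign `s`, with the loop on side `t` and the strand at `(i,a)` passing
through the other side `t'`, multiplies the determinant by `κ`, where `κ = −x` for a
positive crossing with left loop, `κ = −1` for a positive crossing with right loop or a
negative crossing with left loop, and `κ = −x⁻¹` for a negative crossing with right loop. -/
theorem det_reidemeister_I {R : Type*} [CommRing R] (x y : Rˣ)
    (n : ℕ) (hn : 1 ≤ n) (ε : Fin n → Bool) (σ : Equiv.Perm (Fin n × Fin 2))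
    (ia : Fin n × Fin 2) (s : Bool) (t t' : Fin 2) (htt' : t' ≠ t)
    (ε' : Fin (n + 1) → Bool)
    (hε'old : ∀ i : Fin n, ε' i.castSucc = ε i)
    (hε'c : ε' (Fin.last n) = s)
    (σ' : Equiv.Perm (Fin (n + 1) × Fin 2))
    (h1 : σ' (Fin.last n, t) = (Fin.last n, t))
    (h2 : σ' (ia.1.castSucc, ia.2) = (Fin.last n, t'))
    (h3 : σ' (Fin.last n, t') = ((σ ia).1.castSucc, (σ ia).2))
    (h4 : ∀ p : Fin n × Fin 2, p ≠ ia →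
      σ' (p.1.castSucc, p.2) = ((σ p).1.castSucc, (σ p).2)) :
    (blockDiag (fun i => if ε' i then Mpos x y else Mneg x y) - permMat R σ').det
      = (if s then (if t = 0 then -(x : R) else -1)
          else (if t = 0 then -1 else -((x⁻¹ : Rˣ) : R)))
        * (blockDiag (fun i => if ε i then Mpos x y else Mneg x y) - permMat R σ).det := by
  have hlast : ∀ i : Fin n, Fin.castSucc i ≠ Fin.last n := fun i => (Fin.castSucc_lt_last i).ne
  have ht0 : Equiv.swap 0 t 0 = t := Equiv.swap_apply_left 0 t
  have ht1 : Equiv.swap 0 t 1 = t' := by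
    fin_cases t <;> fin_cases t' <;> simp_all
  set Mc : Matrix (Fin 2) (Fin 2) R := if s then Mpos x y else Mneg x y with hMc
  set A : Matrix (Fin n × Fin 2) (Fin n × Fin 2) R :=
    blockDiag (fun i => if ε i then Mpos x y else Mneg x y) - permMat R σ with hA
  set B : Matrix (Fin n × Fin 2) (Fin n × Fin 2) R :=
    A + Matrix.of (fun p q => if p = ia ∧ q = σ ia then (1 : R) else 0) with hB
  set C : Matrix (Fin n × Fin 2) (Fin 2) R :=
    fun p j => if p = ia ∧ j = 1 then (-1 : R) else 0 with hC
  set D : Matrix (Fin 2) (Fin n × Fin 2) R :=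
    fun j q => if j = 1 ∧ q = σ ia then (-1 : R) else 0 with hD
  set E : Matrix (Fin 2) (Fin 2) R := !![Mc t t - 1, Mc t t'; Mc t' t, Mc t' t'] with hE
  -- the scalar κ equals `Mc t t - 1`
  have hκ : (if s then (if t = 0 then -(x : R) else -1)
      else (if t = 0 then -1 else -((x⁻¹ : Rˣ) : R))) = Mc t t - 1 := by
    rcases s with _ | _ <;> fin_cases t <;>
      simp [hMc, Mpos, Mneg] <;> ring
  have hunit : IsUnit (Mc t t - 1) := by
    rw [← hκ]
    rcases s with _ | _ <;> fin_cases t <;> simp <;>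
      first
        | exact (Units.isUnit x).neg
        | exact (Units.isUnit x⁻¹).neg
        | exact isUnit_one.neg
  have hdetE : E.det = Mc t t - 1 := by
    rw [hE, Matrix.det_fin_two_of]
    rcases s with _ | _ <;> fin_cases t <;> fin_cases t' <;>
        simp_all [hMc, Mpos, Mneg] <;>
      first
        | linear_combination (-(x : R)) * Units.mul_inv y
        | linear_combination (-(x : R)) * Units.inv_mul y
        | linear_combination (-((x⁻¹ : Rˣ) : R)) * Units.mul_inv y
        | linear_combination (-((x⁻¹ : Rˣ) : R)) * Units.inv_mul y
        | linear_combination (x : R) * Units.mul_inv y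
        | linear_combination (x : R) * Units.inv_mul y
        | linear_combination ((x⁻¹ : Rˣ) : R) * Units.mul_inv y
        | linear_combination ((x⁻¹ : Rˣ) : R) * Units.inv_mul y
  haveI : Invertible E := E.invertibleOfIsUnitDet (hdetE ▸ hunit)
  -- the reindexed matrix is a block matrix
  have hsub : (blockDiag (fun i => if ε' i then Mpos x y else Mneg x y)
        - permMat R σ').submatrix (kinkEquiv n t) (kinkEquiv n t)
      = Matrix.fromBlocks B C D E := by
    ext u v
    rcases u with p | j
    · rcases v with q | k
      · -- old × old block
        simp only [Matrix.submatrix_apply, kinkEquiv, Equiv.coe_fn_mk, Sum.elim_inl,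
          Matrix.fromBlocks_apply₁₁, Matrix.sub_apply, hB, hA, Matrix.add_apply]
        have hbd : blockDiag (fun i => if ε' i then Mpos x y else Mneg x y)
            (p.1.castSucc, p.2) (q.1.castSucc, q.2)
            = blockDiag (fun i => if ε i then Mpos x y else Mneg x y) p q := by
          simp only [blockDiag, Fin.castSucc_inj]
          split <;> simp [hε'old]
        rw [hbd]
        by_cases hp : p = ia
        · subst hp
          have : σ' (p.1.castSucc, p.2) = (Fin.last n, t') := h2
          simp only [permMat, this, Prod.mk.injEq]
          rw [if_neg (by rintro ⟨h, -⟩; exact hlast q.1 h.symm)]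
          rcases eq_or_ne q (σ p) with hq | hq
          · subst hq
            simp
          · rw [if_neg (fun h => hq h.symm)]
            simp [Matrix.of_apply, hq]
        · simp only [permMat]
          rw [h4 p hp]
          simp only [Prod.mk.injEq, Fin.castSucc_inj, ← Prod.ext_iff]
          simp [hp]
      · -- old × new block
        simp only [Matrix.submatrix_apply, kinkEquiv, Equiv.coe_fn_mk, Sum.elim_inl,
          Sum.elim_inr, Matrix.fromBlocks_apply₁₂, Matrix.sub_apply]
        simp only [hC]
        have hz : blockDiag (fun i => if ε' i then Mpos x y else Mneg x y)
            (p.1.castSucc, p.2) (Fin.last n, Equiv.swap 0 t k) = 0 := by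
          simp [blockDiag, hlast p.1]
        rw [hz]
        by_cases hp : p = ia
        · subst hp
          simp only [permMat, h2, Prod.mk.injEq, true_and]
          fin_cases k <;>
            simp [ht0, ht1, (Ne.symm htt' : t ≠ t'), htt']
        · simp only [permMat]
          rw [h4 p hp]
          simp [hp, Prod.mk.injEq, hlast (σ p).1]
    · rcases v with q | k
      · -- new × old block
        simp only [Matrix.submatrix_apply, kinkEquiv, Equiv.coe_fn_mk, Sum.elim_inl,
          Sum.elim_inr, Matrix.fromBlocks_apply₂₁, Matrix.sub_apply]
        simp only [hD]
        have hz : blockDiag (fun i => if ε' i then Mpos x y else Mneg x y)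
            (Fin.last n, Equiv.swap 0 t j) (q.1.castSucc, q.2) = 0 := by
          simp [blockDiag, (hlast q.1).symm]
        rw [hz]
        fin_cases j
        · simp only [Fin.zero_eta, ht0, permMat, h1, Prod.mk.injEq]
          rw [if_neg (by rintro ⟨h, -⟩; exact hlast q.1 h.symm)]
          simp
        · simp only [Fin.mk_one, ht1, permMat, h3, Prod.mk.injEq, Fin.castSucc_inj,
            ← Prod.ext_iff]
          rcases eq_or_ne q (σ ia) with hq | hq
          · subst hq
            simp
          · simp [hq, Ne.symm hq]
      · -- new × new block
        simp only [Matrix.submatrix_apply, kinkEquiv, Equiv.coe_fn_mk,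
          Sum.elim_inr, Matrix.fromBlocks_apply₂₂, Matrix.sub_apply, hE]
        have hbd : blockDiag (fun i => if ε' i then Mpos x y else Mneg x y)
            (Fin.last n, Equiv.swap 0 t j) (Fin.last n, Equiv.swap 0 t k)
            = Mc (Equiv.swap 0 t j) (Equiv.swap 0 t k) := by
          simp [blockDiag, hε'c, hMc]
        rw [hbd]
        fin_cases j <;> fin_cases k <;>
          simp [ht0, ht1, permMat, h1, h3, Prod.mk.injEq, (hlast (σ ia).1),
            (Ne.symm htt' : t ≠ t'), htt']
  have hdet1 : (blockDiag (fun i => if ε' i then Mpos x y else Mneg x y)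
        - permMat R σ').det = (Matrix.fromBlocks B C D E).det := by
    rw [← Matrix.det_submatrix_equiv_self (kinkEquiv n t), hsub]
  have hinv11 : (⅟E) 1 1 = 1 := by
    rw [Matrix.invOf_eq_nonsing_inv, Matrix.inv_def, hdetE]
    rw [hE, Matrix.adjugate_fin_two]
    simp only [Matrix.smul_apply, Matrix.cons_val_one, Matrix.head_cons, Matrix.head_fin_const,
      Matrix.cons_val_zero, smul_eq_mul]
    exact Ring.inverse_mul_cancel _ hunit
  have hBCD : B - C * ⅟E * D = A := by
    ext p q
    have hC0 : C p 0 = 0 := by simp [hC]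
    have hCXD : (C * ⅟E * D) p q
        = (if p = ia then (-1 : R) else 0) * (if q = σ ia then (-1 : R) else 0) := by
      simp only [Matrix.mul_apply, Fin.sum_univ_two]
      simp only [hC, hD]
      simp [hinv11]
    simp only [Matrix.sub_apply, hB, Matrix.add_apply, hCXD]
    by_cases hp : p = ia <;> by_cases hq : q = σ ia <;> simp [hp, hq]
  rw [hdet1, Matrix.det_fromBlocks₂₂, hBCD, hdetE, ← hκ]
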